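/- Let S be a fold string and set z = f(θ_S(a)). Then, as subsets of ℂ: i·K[θ_S(a)] = K[θ_S(d)] + iz, (−1)·K[θ_S(a)] = K[θ_S(c)], and (−i)·K[θ_S(a)] = K[θ_S(b)] − iz. -/

import Mathlib

open scoped Classical

/-- Letters of the folding alphabet {D, U}. -/
inductive FoldLetter : Type
  | D : FoldLetter
  | U : FoldLetter
deriving DecidableEq

/-- Words over {D, U}. -/
abbrev FWord := List FoldLetter

/-- The letter morphism μ swapping D and U. -/
def mir : FoldLetter → FoldLetter
  | .D => .U
  | .U => .D

/-- S̄ = μ(τ(S)): reverse the word and swap D and U. -/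
def fbar (S : FWord) : FWord := (S.reverse).map mir

/-- The folding convolution S * T. -/
def conv (S : FWord) : FWord → FWord
  | [] => S
  | b :: T => S ++ b :: conv (fbar S) T

/-- A fold string: a nonempty word over {D,U} starting with D. -/
def IsFoldString (S : FWord) : Prop := S ≠ [] ∧ S.head? = some FoldLetter.D

/-- The alphabet A = {a,b,c,d}, encoded as ZMod 4 (a = 0, b = 1, c = 2, d = 3),
so that σ is addition of 1 and f is k ↦ i^k. -/
abbrev Alpha := ZMod 4

/-- Words over A. -/
abbrev AWord := List Alpha

/-- w(D) = 1, w(U) = -1. -/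
def wInt : FoldLetter → ℤ
  | .D => 1
  | .U => -1

/-- The homomorphism w on words. -/
def wSum (S : FWord) : ℤ := (S.map wInt).sum

/-- θ_S(a) = e₀ e₁ ⋯ e_{m-1} with e₀ = a and e_i = σ^{w(a₁⋯a_i)}(a). -/
def thetaA (S : FWord) : AWord :=
  (List.range (S.length + 1)).map (fun i => ((wSum (S.take i) : ℤ) : Alpha))

/-- The word operation στ (reverse, then cyclically shift each letter). -/
def st (v : AWord) : AWord := v.reverse.map (· + 1)

/-- θ_S on a letter: θ_S(σ^k(a)) = (στ)^k (θ_S(a)). -/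
def thetaL (S : FWord) (e : Alpha) : AWord := st^[e.val] (thetaA S)

/-- The folding morphism θ_S as a monoid endomorphism of A*. -/
def theta (S : FWord) (v : AWord) : AWord := v.flatMap (thetaL S)

/-- f on letters: f(a) = 1, f(b) = i, f(c) = -1, f(d) = -i. -/
noncomputable def fL : Alpha → ℂ := fun e => Complex.I ^ e.val

/-- The homomorphism f : A* → (ℂ, +). -/
noncomputable def fW (v : AWord) : ℂ := (v.map fL).sum

/-- The k-th point z_k of the curve of a word v. -/
noncomputable def pt (v : AWord) (k : ℕ) : ℂ := fW (v.take k)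

/-- The curve of v traverses a segment twice. -/
def TraversesTwice (v : AWord) : Prop :=
  ∃ k l, k < v.length ∧ l < v.length ∧ k ≠ l ∧
    ({pt v k, pt v (k + 1)} : Set ℂ) = ({pt v l, pt v (l + 1)} : Set ℂ)

/-- The fold string S is self-avoiding. -/
def SelfAvoiding (S : FWord) : Prop :=
  ∀ n : ℕ, 1 ≤ n → ¬ TraversesTwice ((theta S)^[n] [0])

/-- z ∈ ℂ is a Gaussian integer. -/
def IsGaussianInt (z : ℂ) : Prop := ∃ p q : ℤ, z = (p : ℂ) + (q : ℂ) * Complex.I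

/-- The number of indices k ∈ {0, …, |v|} with z_k = z (occurrences of z among
the points of the curve of v). -/
noncomputable def countAt (v : AWord) (z : ℂ) : ℕ :=
  ((Finset.range (v.length + 1)).filter (fun k => pt v k = z)).card

/-- The fold string S is planefilling. -/
def Planefilling (S : FWord) : Prop :=
  ∀ R : ℝ, 0 < R → ∃ n : ℕ, 1 ≤ n ∧ ∃ q : ℂ, IsGaussianInt q ∧
    ∀ z : ℂ, IsGaussianInt z → ‖z - q‖ ≤ R →
      2 ≤ countAt ((theta S)^[n] [0]) z

/-- The word θ_S(abcd), whose curve is the θ-loop of S. -/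
def loopWord (S : FWord) : AWord := theta S [0, 1, 2, 3]

/-- The rounding of the closed curve of a word v (all of whose steps are unit
segments and with f(v) = 0), as a subset of ℂ. -/
noncomputable def roundedCurve (v : AWord) : Set ℂ :=
  ⋃ k ∈ Finset.range v.length,
    (segment ℝ (pt v k + (pt v (k + 1) - pt v k) / 4)
        (pt v (k + 1) - (pt v (k + 1) - pt v k) / 4) ∪
      segment ℝ (pt v (k + 1) - (pt v (k + 1) - pt v k) / 4)
        (pt v ((k + 1) % v.length) +
          (pt v ((k + 1) % v.length + 1) - pt v ((k + 1) % v.length)) / 4))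

/-- The number of indices k ∈ {0, …, |v| - 1} with z_k = z (occurrences of z among
the vertices of the closed curve of v). -/
noncomputable def vertexCount (v : AWord) (z : ℂ) : ℕ :=
  ((Finset.range v.length).filter (fun k => pt v k = z)).card

/-- The closed curve of v is maximally simple: it is simple, and every Gaussian
integer lying in a bounded connected component of the complement of its rounding
occurs exactly twice among its vertices. -/
def MaximallySimple (v : AWord) : Prop :=
  ¬ TraversesTwice v ∧
    ∀ z : ℂ, IsGaussianInt z → z ∉ roundedCurve v →
      Bornology.IsBounded (connectedComponentIn (roundedCurve v)ᶜ z) →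
      vertexCount v z = 2

/-- A D-word: letters from {a,c} (even) and {b,d} (odd) alternate. -/
def IsDWord (v : AWord) : Prop :=
  ∀ k (h : k + 1 < v.length),
    (v[k]'(Nat.lt_of_succ_lt h)).val % 2 ≠ (v[k + 1]'h).val % 2

/-- A loop word: a nonempty D-word with f(v) = 0. -/
def IsLoopWord (v : AWord) : Prop := v ≠ [] ∧ IsDWord v ∧ fW v = 0

/-- The eight square words σᵏ(abcd), σᵏ(adcb), k = 0,1,2,3. -/
def squareWords : List AWord :=
  [[0, 1, 2, 3], [1, 2, 3, 0], [2, 3, 0, 1], [3, 0, 1, 2],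
   [0, 3, 2, 1], [1, 0, 3, 2], [2, 1, 0, 3], [3, 2, 1, 0]]

/-- K[v] ⊆ ℂ: the union of the segments of the curve of v. -/
noncomputable def KSet (v : AWord) : Set ℂ :=
  ⋃ k ∈ Finset.range v.length, segment ℝ (pt v k) (pt v (k + 1))

/-- The number of boundary points of S: Gaussian integers visited exactly once
by the curve of θ_S(a). -/
noncomputable def rCount (S : FWord) : ℕ :=
  ((Finset.range ((thetaA S).length + 1)).filter
    (fun k => countAt (thetaA S) (pt (thetaA S) k) = 1)).card

/-- The k-th point Z_k of the infinite curve of S. -/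
noncomputable def Zpt (S : FWord) (k : ℕ) : ℂ := pt ((theta S)^[k] [0]) k

/-- The fold string S is perfect. -/
def IsPerfectFold (S : FWord) : Prop :=
  SelfAvoiding S ∧
    ∀ p q : ℂ, IsGaussianInt p → IsGaussianInt q → ‖p - q‖ = 1 →
      ∃! jk : Fin 4 × ℕ,
        ({Complex.I ^ (jk.1 : ℕ) * Zpt S jk.2,
          Complex.I ^ (jk.1 : ℕ) * Zpt S (jk.2 + 1)} : Set ℂ) = ({p, q} : Set ℂ)

/- Auxiliary lemmas -/

lemma I_pow_mod_four' (m : ℕ) : Complex.I ^ (m % 4) = Complex.I ^ m := by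
  conv_rhs => rw [← Nat.div_add_mod m 4]
  rw [pow_add, pow_mul, Complex.I_pow_four, one_pow, one_mul]

lemma fL_add_one (e : Alpha) : fL (e + 1) = Complex.I * fL e := by
  have hval : (e + 1).val = (e.val + 1) % 4 := by
    rw [ZMod.val_add]; congr 1
  rw [fL, fL, hval, I_pow_mod_four', pow_succ]; ring

lemma fW_map_add_one (l : AWord) : fW (l.map (· + 1)) = Complex.I * fW l := by
  induction l with
  | nil => simp [fW]
  | cons a l ih =>
    simp only [fW, List.map_cons, List.sum_cons] at ih ⊢
    rw [fL_add_one, ih]; ring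

lemma fW_append (l m : AWord) : fW (l ++ m) = fW l + fW m := by simp [fW]

lemma fW_reverse (l : AWord) : fW l.reverse = fW l := by
  simp [fW, List.map_reverse, List.sum_reverse]

lemma fW_st (v : AWord) : fW (st v) = Complex.I * fW v := by
  rw [st, fW_map_add_one, fW_reverse]

lemma pt_st (v : AWord) (k : ℕ) :
    pt (st v) k = Complex.I * fW v - Complex.I * pt v (v.length - k) := by
  unfold pt st
  rw [← List.map_take, fW_map_add_one, List.take_reverse, fW_reverse]
  have h := fW_append (v.take (v.length - k)) (v.drop (v.length - k))
  rw [List.take_append_drop] at h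
  rw [h]; ring

/-- The affine map `x ↦ c * x + d` on `ℂ` as an `ℝ`-affine map. -/
noncomputable def afm (c d : ℂ) : ℂ →ᵃ[ℝ] ℂ where
  toFun := fun x => c * x + d
  linear := {
    toFun := fun x => c * x
    map_add' := by intro x y; ring
    map_smul' := by intro r x; simp [Complex.real_smul]; ring }
  map_vadd' := by intro p v; simp [add_comm]; ring

lemma image_segment_affine (c d a b : ℂ) :
    (fun x : ℂ => c * x + d) '' segment ℝ a b = segment ℝ (c * a + d) (c * b + d) := by
  have h := image_segment ℝ (afm c d) a b
  simpa [afm] using h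

lemma KSet_st (v : AWord) :
    KSet (st v) = (fun x : ℂ => Complex.I * fW v - Complex.I * x) '' KSet v := by
  have hlen : (st v).length = v.length := by simp [st]
  set n := v.length with hn
  have hseg : ∀ k, k < n → segment ℝ (pt (st v) k) (pt (st v) (k + 1)) =
      (fun x : ℂ => Complex.I * fW v - Complex.I * x) ''
        segment ℝ (pt v (n - 1 - k)) (pt v (n - 1 - k + 1)) := by
    intro k hk
    have e1 : n - k = n - 1 - k + 1 := by omega
    have e2 : n - (k + 1) = n - 1 - k := by omega
    rw [pt_st, pt_st, ← hn, e1, e2]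
    have heq : (fun x : ℂ => Complex.I * fW v - Complex.I * x)
        = fun x : ℂ => (-Complex.I) * x + Complex.I * fW v := by funext x; ring
    rw [heq, image_segment_affine, segment_symm]
    congr 1 <;> ring
  unfold KSet
  rw [hlen, Set.image_iUnion₂]
  ext x
  simp only [Set.mem_iUnion, Finset.mem_range, ← hn]
  constructor
  · rintro ⟨k, hk, hx⟩
    exact ⟨n - 1 - k, by omega, by rw [← hseg k hk]; exact hx⟩
  · rintro ⟨k, hk, hx⟩
    refine ⟨n - 1 - k, by omega, ?_⟩
    rw [hseg (n - 1 - k) (by omega)]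
    have h' : n - 1 - (n - 1 - k) = k := by omega
    rw [h']; exact hx

lemma theta_single (S : FWord) (e : Alpha) : theta S [e] = thetaL S e := by
  simp [theta]

/-- i·K[θ_S(a)] = K[θ_S(d)] + iz, (−1)·K[θ_S(a)] = K[θ_S(c)],
and (−i)·K[θ_S(a)] = K[θ_S(b)] − iz, where z = f(θ_S(a)). -/
theorem rotate_KSet (S : FWord) (hS : IsFoldString S) :
    (fun x : ℂ => Complex.I * x) '' KSet (theta S [0]) =
        (fun x : ℂ => x + Complex.I * fW (thetaA S)) '' KSet (theta S [3]) ∧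
    (fun x : ℂ => (-1 : ℂ) * x) '' KSet (theta S [0]) = KSet (theta S [2]) ∧
    (fun x : ℂ => -Complex.I * x) '' KSet (theta S [0]) =
        (fun x : ℂ => x - Complex.I * fW (thetaA S)) '' KSet (theta S [1]) := by
  have h0 : theta S [0] = thetaA S := by
    rw [theta_single]
    show st^[(0 : Alpha).val] (thetaA S) = thetaA S
    norm_num
  have h1 : theta S [1] = st (thetaA S) := by
    rw [theta_single]
    show st^[(1 : Alpha).val] (thetaA S) = st (thetaA S)
    have : (1 : Alpha).val = 1 := rfl
    rw [this, Function.iterate_one]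
  have h2 : theta S [2] = st (st (thetaA S)) := by
    rw [theta_single]
    show st^[(2 : Alpha).val] (thetaA S) = st (st (thetaA S))
    have : (2 : Alpha).val = 2 := rfl
    rw [this]
    rfl
  have h3 : theta S [3] = st (st (st (thetaA S))) := by
    rw [theta_single]
    show st^[(3 : Alpha).val] (thetaA S) = st (st (st (thetaA S)))
    have : (3 : Alpha).val = 3 := rfl
    rw [this]
    rfl
  refine ⟨?_, ?_, ?_⟩
  · rw [h0, h3, KSet_st, KSet_st, KSet_st, fW_st, fW_st,
      Set.image_image, Set.image_image, Set.image_image]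
    exact Set.image_congr fun a _ => by
      linear_combination Complex.I * (a - fW (thetaA S)) * Complex.I_sq
  · rw [h0, h2, KSet_st, KSet_st, fW_st, Set.image_image]
    exact Set.image_congr fun a _ => by
      linear_combination (-a) * Complex.I_sq
  · rw [h0, h1, KSet_st, Set.image_image]
    exact Set.image_congr fun a _ => by ring
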